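/- Let R = F[G, η, α] be a crossed product of a left-ordered group G over a skew field F. Then the group of units of R is exactly F^× · X_G = {a x_g | a ∈ F^×, g ∈ G}. -/
import Mathlib


/-- The group of units of a crossed product `F[G, η, α]` of a left-ordered
group `G` over a skew field `F` is exactly `F^× X_G = {a·x_g | a ∈ F^×, g ∈ G}`. -/
theorem stmt15 {F S G : Type*} [DivisionRing F] [Ring S] [Group G] [LinearOrder G]
    (hinv : ∀ a b c : G, a ≤ b → c * a ≤ c * b)
    (ι : F →+* S) (x : G → S) (η : G → G → Fˣ) (α : G → F ≃+* F)
    (hx1 : x 1 = 1)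
    (hmul : ∀ g h : G, x g * x h = ι (η g h) * x (g * h))
    (hcomm : ∀ (g : G) (a : F), x g * ι a = ι (α g a) * x g)
    (hindep : ∀ (s : Finset G) (c : G → F),
      ∑ g ∈ s, ι (c g) * x g = 0 → ∀ g ∈ s, c g = 0)
    (hspan : ∀ y : S, ∃ (s : Finset G) (c : G → F), y = ∑ g ∈ s, ι (c g) * x g) :
    ∀ u : S, IsUnit u ↔ ∃ (a : Fˣ) (g : G), u = ι a * x g := by
  -- S is nontrivial
  have hone : (1 : S) ≠ 0 := by
    intro h
    have h1 : ∑ g ∈ ({1} : Finset G), ι ((fun _ => (1 : F)) g) * x g = 0 := by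
      simp [hx1, h]
    exact one_ne_zero (hindep {1} (fun _ => 1) h1 1 (Finset.mem_singleton_self 1))
  -- the basic product formula for monomials
  have hmono : ∀ (a b : F) (g h : G),
      (ι a * x g) * (ι b * x h) = ι (a * (α g b * (η g h : F))) * x (g * h) := by
    intro a b g h
    calc (ι a * x g) * (ι b * x h)
        = ι a * ((x g * ι b) * x h) := by rw [mul_assoc, mul_assoc]
      _ = ι a * (ι (α g b) * (x g * x h)) := by rw [hcomm, mul_assoc]
      _ = ι a * (ι (α g b) * (ι (η g h) * x (g * h))) := by rw [hmul]
      _ = ι (a * (α g b * (η g h : F))) * x (g * h) := by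
          simp only [map_mul, mul_assoc]
  -- monomials with unit coefficient have a right inverse of the same shape
  have hrinv : ∀ (a : F) (g : G), a ≠ 0 →
      ∃ b : F, b ≠ 0 ∧ (ι a * x g) * (ι b * x g⁻¹) = 1 := by
    intro a g ha
    refine ⟨(α g).symm (a⁻¹ * ((η g g⁻¹ : F))⁻¹), ?_, ?_⟩
    · intro h0
      have := (α g).symm.injective (h0.trans (map_zero (α g).symm).symm)
      exact mul_ne_zero (inv_ne_zero ha) (inv_ne_zero (η g g⁻¹).ne_zero) this
    · rw [hmono]
      have : a * (α g ((α g).symm (a⁻¹ * ((η g g⁻¹ : F))⁻¹)) * (η g g⁻¹ : F)) = 1 := by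
        rw [RingEquiv.apply_symm_apply, mul_assoc,
          inv_mul_cancel₀ (η g g⁻¹).ne_zero, mul_one, mul_inv_cancel₀ ha]
      rw [this, map_one, one_mul, mul_inv_cancel, hx1]
  intro u
  constructor
  · -- hard direction
    rintro ⟨U, rfl⟩
    classical
    obtain ⟨s, c, hc⟩ := hspan (U : S)
    obtain ⟨t, d, hd⟩ := hspan ((U⁻¹ : Sˣ) : S)
    set A : Finset G := s.filter (fun g => c g ≠ 0) with hAdef
    set B : Finset G := t.filter (fun h => d h ≠ 0) with hBdef
    have hAmem : ∀ g ∈ A, c g ≠ 0 := fun g hg => (Finset.mem_filter.mp hg).2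
    have hBmem : ∀ h ∈ B, d h ≠ 0 := fun h hh => (Finset.mem_filter.mp hh).2
    have hu' : (U : S) = ∑ g ∈ A, ι (c g) * x g := by
      rw [hc]
      rw [hAdef, Finset.sum_filter]
      refine Finset.sum_congr rfl fun g _ => ?_
      by_cases h : c g = 0
      · simp [h]
      · simp [h]
    have hv' : ((U⁻¹ : Sˣ) : S) = ∑ h ∈ B, ι (d h) * x h := by
      rw [hd]
      rw [hBdef, Finset.sum_filter]
      refine Finset.sum_congr rfl fun g _ => ?_
      by_cases h : d g = 0
      · simp [h]
      · simp [h]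
    have huv : (U : S) * ((U⁻¹ : Sˣ) : S) = 1 := U.mul_inv
    have hAne : A.Nonempty := by
      rcases A.eq_empty_or_nonempty with h | h
      · exfalso
        apply hone
        rw [← huv, hu', h, Finset.sum_empty, zero_mul]
      · exact h
    have hBne : B.Nonempty := by
      rcases B.eq_empty_or_nonempty with h | h
      · exfalso
        apply hone
        rw [← huv, hv', h, Finset.sum_empty, mul_zero]
      · exact h
    -- the coefficient function of the product
    set f : G × G → F := fun p => c p.1 * (α p.1 (d p.2) * (η p.1 p.2 : F)) with hfdef
    have hprod : (U : S) * ((U⁻¹ : Sˣ) : S) =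
        ∑ p ∈ A ×ˢ B, ι (f p) * x (p.1 * p.2) := by
      rw [hu', hv', Finset.sum_mul_sum, ← Finset.sum_product']
      exact Finset.sum_congr rfl fun p _ => hmono _ _ _ _
    set T : Finset G := (A ×ˢ B).image (fun p => p.1 * p.2) with hTdef
    set K : Finset G := insert 1 T with hKdef
    have hmaps : ∀ p ∈ A ×ˢ B, p.1 * p.2 ∈ K := fun p hp =>
      Finset.mem_insert_of_mem (Finset.mem_image_of_mem _ hp)
    set E : G → F := fun k =>
      (∑ p ∈ (A ×ˢ B).filter (fun p => p.1 * p.2 = k), f p) -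
        (if k = 1 then 1 else 0) with hEdef
    have h3 : ∑ k ∈ K, ι (E k) * x k = 0 := by
      have hsum1 : ∑ k ∈ K, ι (if k = 1 then (1 : F) else 0) * x k = 1 := by
        rw [Finset.sum_eq_single_of_mem 1 (Finset.mem_insert_self 1 T)]
        · simp [hx1]
        · intro k _ hk1
          simp [hk1]
      have hsum2 : ∑ k ∈ K,
          ι (∑ p ∈ (A ×ˢ B).filter (fun p => p.1 * p.2 = k), f p) * x k =
          (U : S) * ((U⁻¹ : Sˣ) : S) := by
        rw [hprod, ← Finset.sum_fiberwise_of_maps_to hmaps (fun p => ι (f p) * x (p.1 * p.2))]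
        refine Finset.sum_congr rfl fun k _ => ?_
        rw [map_sum, Finset.sum_mul]
        refine Finset.sum_congr rfl fun p hp => ?_
        rw [(Finset.mem_filter.mp hp).2]
      calc ∑ k ∈ K, ι (E k) * x k
          = ∑ k ∈ K, (ι (∑ p ∈ (A ×ˢ B).filter (fun p => p.1 * p.2 = k), f p) * x k -
              ι (if k = 1 then (1 : F) else 0) * x k) := by
            refine Finset.sum_congr rfl fun k _ => ?_
            rw [hEdef]
            simp only [map_sub, sub_mul]
        _ = (U : S) * ((U⁻¹ : Sˣ) : S) - 1 := by
            rw [Finset.sum_sub_distrib, hsum2, hsum1]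
        _ = 0 := by rw [huv, sub_self]
    have hE := hindep K E h3
    -- extremal elements
    set β : G := B.min' hBne with hβdef
    set β' : G := B.max' hBne with hβ'def
    have hβB : β ∈ B := B.min'_mem hBne
    have hβ'B : β' ∈ B := B.max'_mem hBne
    have hAimg : (A.image (fun a => a * β)).Nonempty := hAne.image _
    have hAimg' : (A.image (fun a => a * β')).Nonempty := hAne.image _
    set m : G := (A.image (fun a => a * β)).min' hAimg with hmdef
    set M : G := (A.image (fun a => a * β')).max' hAimg' with hMdef
    obtain ⟨a₀, ha₀A, ha₀⟩ := Finset.mem_image.mp ((A.image (fun a => a * β)).min'_mem hAimg)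
    obtain ⟨a₁, ha₁A, ha₁⟩ := Finset.mem_image.mp ((A.image (fun a => a * β')).max'_mem hAimg')
    -- m is a lower bound, M an upper bound for all products
    have hmle : ∀ g ∈ A, ∀ h ∈ B, m ≤ g * h := by
      intro g hg h hh
      exact le_trans (Finset.min'_le _ _ (Finset.mem_image_of_mem _ hg))
        (hinv β h g (B.min'_le h hh))
    have hMge : ∀ g ∈ A, ∀ h ∈ B, g * h ≤ M := by
      intro g hg h hh
      have h1 : g * β' ≤ M :=
        Finset.le_max' (A.image (fun a => a * β')) (g * β')
          (Finset.mem_image_of_mem (fun a => a * β') hg)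
      exact le_trans (hinv h β' g (B.le_max' h hh)) h1
    -- the fibers over m and M are singletons
    have fib_min : ∀ p ∈ (A ×ˢ B).filter (fun p => p.1 * p.2 = m), p = (a₀, β) := by
      rintro ⟨g, h⟩ hp
      obtain ⟨hmem, heq⟩ := Finset.mem_filter.mp hp
      obtain ⟨hg, hh⟩ := Finset.mem_product.mp hmem
      have heq' : g * h = m := heq
      have h1 : m ≤ g * β :=
        Finset.min'_le (A.image (fun a => a * β)) (g * β)
          (Finset.mem_image_of_mem (fun a => a * β) hg)
      have h2 : g * β ≤ g * h := hinv β h g (B.min'_le h hh)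
      have h3 : g * β = g * h := le_antisymm h2 (heq'.le.trans h1)
      have hhβ : h = β := mul_left_cancel h3.symm
      have hga : g = a₀ := mul_right_cancel ((h3.trans heq').trans ha₀.symm : g * β = a₀ * β)
      simp [hhβ, hga]
    have fib_max : ∀ p ∈ (A ×ˢ B).filter (fun p => p.1 * p.2 = M), p = (a₁, β') := by
      rintro ⟨g, h⟩ hp
      obtain ⟨hmem, heq⟩ := Finset.mem_filter.mp hp
      obtain ⟨hg, hh⟩ := Finset.mem_product.mp hmem
      have heq' : g * h = M := heq
      have h1 : g * β' ≤ M :=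
        Finset.le_max' (A.image (fun a => a * β')) (g * β')
          (Finset.mem_image_of_mem (fun a => a * β') hg)
      have h2 : g * h ≤ g * β' := hinv h β' g (B.le_max' h hh)
      have h3 : g * β' = g * h := le_antisymm (h1.trans_eq heq'.symm) h2
      have hhβ : h = β' := mul_left_cancel h3.symm
      have hga : g = a₁ := mul_right_cancel ((h3.trans heq').trans ha₁.symm : g * β' = a₁ * β')
      simp [hhβ, hga]
    -- nonvanishing of the extremal coefficients
    have hfne : ∀ g ∈ A, ∀ h ∈ B, f (g, h) ≠ 0 := by
      intro g hg h hh
      refine mul_ne_zero (hAmem g hg) (mul_ne_zero ?_ (η g h).ne_zero)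
      intro h0
      exact hBmem h hh ((α g).injective (h0.trans (map_zero (α g)).symm))
    have hfib_min_eq : (A ×ˢ B).filter (fun p => p.1 * p.2 = m) = {(a₀, β)} := by
      apply Finset.eq_singleton_iff_unique_mem.mpr
      constructor
      · exact Finset.mem_filter.mpr ⟨Finset.mem_product.mpr ⟨ha₀A, hβB⟩, ha₀⟩
      · exact fib_min
    have hfib_max_eq : (A ×ˢ B).filter (fun p => p.1 * p.2 = M) = {(a₁, β')} := by
      apply Finset.eq_singleton_iff_unique_mem.mpr
      constructor
      · exact Finset.mem_filter.mpr ⟨Finset.mem_product.mpr ⟨ha₁A, hβ'B⟩, ha₁⟩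
      · exact fib_max
    have hmK : m ∈ K := Finset.mem_insert_of_mem
      (Finset.mem_image.mpr ⟨(a₀, β), Finset.mem_product.mpr ⟨ha₀A, hβB⟩, ha₀⟩)
    have hMK : M ∈ K := Finset.mem_insert_of_mem
      (Finset.mem_image.mpr ⟨(a₁, β'), Finset.mem_product.mpr ⟨ha₁A, hβ'B⟩, ha₁⟩)
    -- conclude m = 1 and M = 1
    have hm1 : m = 1 := by
      by_contra hne
      have := hE m hmK
      rw [hEdef] at this
      simp only [hfib_min_eq, Finset.sum_singleton, if_neg hne, sub_zero] at this
      exact hfne a₀ ha₀A β hβB this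
    have hM1 : M = 1 := by
      by_contra hne
      have := hE M hMK
      rw [hEdef] at this
      simp only [hfib_max_eq, Finset.sum_singleton, if_neg hne, sub_zero] at this
      exact hfne a₁ ha₁A β' hβ'B this
    -- all products coincide, so A is a singleton
    have hA1 : ∀ g ∈ A, g = a₀ := by
      intro g hg
      have h1 : m ≤ g * β := hmle g hg β hβB
      have h2 : g * β ≤ M := hMge g hg β hβB
      have h3 : g * β = m := le_antisymm (h2.trans_eq (hM1.trans hm1.symm)) h1
      have : (g, β) = (a₀, β) := fib_min (g, β)
        (Finset.mem_filter.mpr ⟨Finset.mem_product.mpr ⟨hg, hβB⟩, h3⟩)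
      exact congrArg Prod.fst this
    have hAeq : A = {a₀} :=
      Finset.eq_singleton_iff_unique_mem.mpr ⟨ha₀A, hA1⟩
    refine ⟨Units.mk0 (c a₀) (hAmem a₀ ha₀A), a₀, ?_⟩
    rw [hu', hAeq, Finset.sum_singleton]
    rfl
  · -- easy direction
    rintro ⟨a, g, rfl⟩
    obtain ⟨b, hb, h1⟩ := hrinv (a : F) g a.ne_zero
    obtain ⟨b2, _, h2⟩ := hrinv b g⁻¹ hb
    set u := ι (a : F) * x g
    set v := ι b * x g⁻¹
    set w := ι b2 * x g⁻¹⁻¹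
    have hwu : w = u := by
      calc w = 1 * w := (one_mul w).symm
        _ = (u * v) * w := by rw [h1]
        _ = u * (v * w) := mul_assoc _ _ _
        _ = u := by rw [h2, mul_one]
    have hvu : v * u = 1 := by rw [← hwu]; exact h2
    exact ⟨⟨u, v, h1, hvu⟩, rfl⟩
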